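/- For every integer m ≥ 1, every n ∈ ℤ, every x ∈ ℤ, and every radius r > 1, ∇^n w_m(x) = (−1)^{n−1} ∮_{γ_r(1)} G*(z | n, m, x−1) dz. -/

import Mathlib

open MeasureTheory ProbabilityTheory Complex
open scoped Real BigOperators Nat

noncomputable section

/-- Forward difference operator `∇f(x) = f(x+1) − f(x)`. -/
def nab (f : ℤ → ℂ) : ℤ → ℂ := fun x => f (x + 1) - f x

/-- Inverse difference: `∇⁻¹f(x) = ∑_{y<x} f(y)` (a `tsum`; for functions vanishing
to the left of some integer this is the finite sum of the paper). -/
def nabInv (f : ℤ → ℂ) : ℤ → ℂ := fun x => ∑' y : {y : ℤ // y < x}, f y.1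

/-- `∇^k` for `k : ℤ`. -/
def nabIter (k : ℤ) (f : ℤ → ℂ) : ℤ → ℂ :=
  if 0 ≤ k then nab^[k.toNat] f else nabInv^[(-k).toNat] f

/-- The negative binomial weight `w_m(x)`. -/
def wgt (q : ℝ) (m : ℕ) : ℤ → ℂ := fun x =>
  if 0 ≤ x then ((x.toNat + m - 1).choose x.toNat : ℂ) * ((1 : ℂ) - (q : ℂ)) ^ m * (q : ℂ) ^ x
  else 0

/-- Component `x_k` (1-based) of a vector `x : Fin N → ℤ`. -/
def vcomp {N : ℕ} (x : Fin N → ℤ) (k : ℕ) : ℤ :=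
  if h : k - 1 < N then x ⟨k - 1, h⟩ else 0

/-- 1-based access to a finite tuple, extended by `0` out of range. -/
def fext {d : ℕ} {α : Type*} [Zero α] (x : Fin d → α) : ℕ → α := fun k =>
  if h : 1 ≤ k ∧ k ≤ d then x ⟨k - 1, by omega⟩ else 0

/-- The growth function `𝐆(m,n)` built from weights `w`. -/
def growth (w : ℕ → ℕ → ℕ) : ℕ → ℕ → ℕ
  | 0, _ => 0
  | _ + 1, 0 => 0
  | m + 1, n + 1 => max (growth w m (n + 1)) (growth w (m + 1) n) + w (m + 1) (n + 1)
  termination_by m n => m + n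

/-- Normalized contour integral `(1/(2πi)) ∮_{|z−c|=R} f(z) dz` (counterclockwise circle). -/
def cint (c : ℂ) (R : ℝ) (f : ℂ → ℂ) : ℂ :=
  (2 * Real.pi * Complex.I)⁻¹ * (∮ z in C(c, R), f z)

/-- Iterated normalized contour integrals with centers `c` and radii `R`. -/
def multiCintC : (k : ℕ) → (c : Fin k → ℂ) → (R : Fin k → ℝ) → ((Fin k → ℂ) → ℂ) → ℂ
  | 0, _, _, f => f ![]
  | k + 1, c, R, f =>
      cint (c 0) (R 0) fun z =>
        multiCintC k (fun t => c t.succ) (fun t => R t.succ) fun w => f (Fin.cons z w)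

/-- `G*(w | n, m, a)`. -/
def Gstar (q : ℝ) (n m a : ℤ) (w : ℂ) : ℂ :=
  w ^ n * (1 - w) ^ (a + m) / (1 - w / (1 - (q : ℂ))) ^ m

/-- `G(w | n, m, a) = G*(w | n,m,a)/G*(1−√q | n,m,a)`. -/
def Gfun (q : ℝ) (n m a : ℤ) (w : ℂ) : ℂ :=
  Gstar q n m a w / Gstar q n m a (1 - (Real.sqrt q : ℂ))

/-- The block index `r` such that `n_{r−1} < i ≤ n_r`. -/
def blockIdx (n : ℕ → ℕ) (i : ℕ) : ℕ := sInf {r : ℕ | i ≤ n r}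

/-- `r* = min{r, p−1}` for the block of `i`. -/
def rstar (p : ℕ) (n : ℕ → ℕ) (i : ℕ) : ℕ := min (blockIdx n i) (p - 1)

/-- `m(i) = m_{r*}`. -/
def mOf (p : ℕ) (n m : ℕ → ℕ) (i : ℕ) : ℕ := m (rstar p n i)

/-- `a(i) = a_{r*}`. -/
def aOf (p : ℕ) (n : ℕ → ℕ) (a : ℕ → ℤ) (i : ℕ) : ℤ := a (rstar p n i)

/-- `n(i) = n_{r*}`. -/
def nOf (p : ℕ) (n : ℕ → ℕ) (i : ℕ) : ℕ := n (rstar p n i)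



namespace S6

open Metric Set intervalIntegral


variable {q r : ℝ}

lemma norm_sub_one (hz : z ∈ sphere (1:ℂ) r) : ‖z - 1‖ = r := by
  simpa [Complex.dist_eq] using hz

lemma norm_one_sub {z : ℂ} (hz : z ∈ sphere (1:ℂ) r) : ‖(1:ℂ) - z‖ = r := by
  rw [← norm_neg]; simpa using norm_sub_one hz

lemma one_sub_ne (hr : 1 < r) {z : ℂ} (hz : z ∈ sphere (1:ℂ) r) : (1:ℂ) - z ≠ 0 := by
  intro h
  have := norm_one_sub hz
  rw [h] at this
  simp at this; linarith

lemma z_ne_zero (hr : 1 < r) {z : ℂ} (hz : z ∈ sphere (1:ℂ) r) : z ≠ 0 := by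
  intro h
  have := norm_sub_one hz
  rw [h] at this
  simp at this; linarith

lemma one_sub_q_ne (hq1 : q < 1) : (1 : ℂ) - (q:ℂ) ≠ 0 := by
  have : ((1 - q : ℝ) : ℂ) = (1:ℂ) - (q:ℂ) := by push_cast; ring
  rw [← this]
  exact_mod_cast sub_ne_zero.2 (by linarith : (1:ℝ) ≠ q)

lemma z_ne_pole (hq0 : 0 < q) (hq1 : q < 1) (hr : 1 < r) {z : ℂ}
    (hz : z ∈ sphere (1:ℂ) r) : z ≠ 1 - (q:ℂ) := by
  intro h
  have := norm_sub_one hz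
  rw [h] at this
  have : ‖(-(q:ℂ))‖ = r := by simpa [sub_sub_cancel_left] using this
  simp [abs_of_pos hq0] at this
  linarith

lemma denom_base_ne (hq0 : 0 < q) (hq1 : q < 1) (hr : 1 < r) {z : ℂ}
    (hz : z ∈ sphere (1:ℂ) r) : (1:ℂ) - z / (1 - (q:ℂ)) ≠ 0 := by
  have h1q := one_sub_q_ne hq1
  have hzp := z_ne_pole hq0 hq1 hr hz
  intro h
  apply hzp
  field_simp at h
  linear_combination -h


/-- Pointwise step identity for the forward difference. -/
lemma pointwise_step (hq0 : 0 < q) (hq1 : q < 1) (hr : 1 < r) (n m a : ℤ) {z : ℂ}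
    (hz : z ∈ sphere (1:ℂ) r) :
    Gstar q n m (a + 1) z - Gstar q n m a z = -Gstar q (n + 1) m a z := by
  have h1 := one_sub_ne hr hz
  have h0 := z_ne_zero hr hz
  unfold _root_.Gstar
  have e1 : a + 1 + m = (a + m) + 1 := by ring
  rw [e1, zpow_add_one₀ h1, zpow_add_one₀ h0, div_sub_div_same, ← neg_div]
  congr 1
  ring

/-- Shifting the `a` parameter down by a natural number. -/
lemma Gstar_shift (hr : 1 < r) (n m a : ℤ) (k : ℕ) {z : ℂ} (hz : z ∈ sphere (1:ℂ) r) :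
    Gstar q n m (a - k) z = Gstar q n m a z * ((1 - z)⁻¹) ^ k := by
  have h1 := one_sub_ne hr hz
  unfold _root_.Gstar
  have e1 : a - k + m = (a + m) - k := by ring
  rw [e1, zpow_sub₀ h1, zpow_natCast, inv_pow]
  ring

/-- Pointwise geometric series for the inverse difference. -/
lemma pointwise_geom (hq0 : 0 < q) (hq1 : q < 1) (hr : 1 < r) (n m x : ℤ) {z : ℂ}
    (hz : z ∈ sphere (1:ℂ) r) :
    HasSum (fun k : ℕ => Gstar q n m (x - 2 - k) z) (-Gstar q (n - 1) m (x - 1) z) := by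
  have h1 := one_sub_ne hr hz
  have h0 := z_ne_zero hr hz
  have hnorm : ‖((1:ℂ) - z)⁻¹‖ < 1 := by
    rw [norm_inv, norm_one_sub hz]
    rw [inv_lt_one_iff₀]; right; exact hr
  have base := (hasSum_geometric_of_norm_lt_one hnorm).mul_left (Gstar q n m (x - 2) z)
  have hterm : ∀ k : ℕ, Gstar q n m (x - 2) z * ((1 - z)⁻¹) ^ k = Gstar q n m (x - 2 - k) z :=
    fun k => (Gstar_shift hr n m (x - 2) k hz).symm
  rw [funext hterm] at base
  have hv : -Gstar q (n - 1) m (x - 1) z = Gstar q n m (x - 2) z * (1 - (1 - z)⁻¹)⁻¹ := by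
    unfold _root_.Gstar
    have e1 : x - 1 + m = (x - 2 + m) + 1 := by ring
    have hz1 : (1:ℂ) - (1 - z)⁻¹ = -z / (1 - z) := by
      field_simp
      ring
    rw [e1, zpow_add_one₀ h1, zpow_sub_one₀ h0, hz1]
    field_simp
  rw [hv]; exact base



/-- Interchange of `tsum` and `circleIntegral` given a summable uniform bound. -/
lemma circleIntegral_tsum {ι : Type*} [Countable ι] {f : ι → ℂ → ℂ} {c : ℂ} {R : ℝ}
    (hR : 0 < R) (hf : ∀ i, ContinuousOn (f i) (sphere c R))
    {C : ι → ℝ} (hC : Summable C)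
    (hb : ∀ i, ∀ z ∈ sphere c R, ‖f i z‖ ≤ C i) :
    (∮ z in C(c, R), ∑' i, f i z) = ∑' i, ∮ z in C(c, R), f i z := by
  have hcont : ∀ i, Continuous fun θ : ℝ => f i (circleMap c R θ) := fun i =>
    (hf i).comp_continuous (continuous_circleMap c R) fun θ => circleMap_mem_sphere c hR.le θ
  have hder : ∀ θ : ℝ, ‖deriv (circleMap c R) θ‖ = R := by
    intro θ; simp [deriv_circleMap, abs_of_pos hR]
  set F : ι → ℝ → ℂ := fun i θ => deriv (circleMap c R) θ • f i (circleMap c R θ) with hF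
  have hFcont : ∀ i, Continuous (F i) := by
    intro i
    simp only [hF, deriv_circleMap]
    exact ((continuous_circleMap 0 R).mul continuous_const).smul (hcont i)
  have hFint : ∀ i, IntegrableOn (F i) (Set.Ioc 0 (2 * π)) volume := fun i =>
    (hFcont i).integrableOn_Ioc
  have hFsum : Summable fun i => ∫ θ in Set.Ioc 0 (2 * π), ‖F i θ‖ := by
    apply Summable.of_nonneg_of_le (fun i => integral_nonneg fun θ => norm_nonneg _)
      (fun i => ?_) (hC.mul_left (2 * π * R))
    have hle : ∀ θ ∈ Set.Ioc 0 (2 * π), ‖F i θ‖ ≤ R * C i := by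
      intro θ _
      rw [hF]
      simp only [norm_smul, hder]
      exact mul_le_mul_of_nonneg_left (hb i _ (circleMap_mem_sphere c hR.le θ)) hR.le
    have h2 : ∫ θ in Set.Ioc 0 (2 * π), ‖F i θ‖ ≤ ∫ _θ in Set.Ioc 0 (2 * π), R * C i :=
      setIntegral_mono_on (hFint i).norm (integrableOn_const (by simp [Real.volume_Ioc, ENNReal.mul_eq_top]))
        measurableSet_Ioc hle
    have h3 : ∫ _θ in Set.Ioc 0 (2 * π), R * C i = 2 * π * R * C i := by
      simp [Real.volume_Ioc]
      rw [max_eq_left Real.two_pi_pos.le]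
      ring
    linarith
  have key := MeasureTheory.integral_tsum_of_summable_integral_norm
      (μ := volume.restrict (Set.Ioc 0 (2*π))) hFint hFsum
  have hptsum : ∀ θ : ℝ, Summable fun i => f i (circleMap c R θ) := by
    intro θ
    exact Summable.of_norm_bounded hC fun i => hb i _ (circleMap_mem_sphere c hR.le θ)
  have hpt : ∀ θ : ℝ, (∑' i, F i θ) = deriv (circleMap c R) θ • ∑' i, f i (circleMap c R θ) := by
    intro θ
    exact ((hptsum θ).hasSum.const_smul _).tsum_eq
  rw [circleIntegral, intervalIntegral.integral_of_le Real.two_pi_pos.le]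
  have heq : (fun θ => deriv (circleMap c R) θ • ∑' i, f i (circleMap c R θ))
      = fun θ => ∑' i, F i θ := by
    ext θ; exact (hpt θ).symm
  rw [heq, ← key]
  refine tsum_congr fun i => ?_
  rw [circleIntegral, intervalIntegral.integral_of_le Real.two_pi_pos.le]

/-- Finite sum version. -/
lemma circleIntegral_finset_sum {ι : Type*} (s : Finset ι) {f : ι → ℂ → ℂ} {c : ℂ} {R : ℝ}
    (hf : ∀ i ∈ s, CircleIntegrable (f i) c R) :
    (∮ z in C(c, R), ∑ i ∈ s, f i z) = ∑ i ∈ s, ∮ z in C(c, R), f i z := by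
  simp only [circleIntegral, Finset.smul_sum]
  rw [intervalIntegral.integral_finset_sum]
  intro i hi
  exact ((circleIntegrable_iff R).1 (hf i hi))

lemma gstar_contOn (hq0 : 0 < q) (hq1 : q < 1) (hr : 1 < r) (n m a : ℤ) :
    ContinuousOn (Gstar q n m a) (sphere (1:ℂ) r) := by
  have f1 : ContinuousOn (fun w : ℂ => w ^ n) (sphere (1:ℂ) r) :=
    continuousOn_id.zpow₀ n fun z hz => Or.inl (z_ne_zero hr hz)
  have f2 : ContinuousOn (fun w : ℂ => (1 - w) ^ (a + m)) (sphere (1:ℂ) r) :=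
    (continuousOn_const.sub continuousOn_id).zpow₀ _ fun z hz => Or.inl (one_sub_ne hr hz)
  have f3 : ContinuousOn (fun w : ℂ => (1 - w / (1 - (q:ℂ))) ^ m) (sphere (1:ℂ) r) :=
    ((continuousOn_const.sub (continuousOn_id.div_const _))).zpow₀ _ fun z hz =>
      Or.inl (denom_base_ne hq0 hq1 hr hz)
  exact (f1.mul f2).div f3 fun z hz => zpow_ne_zero _ (denom_base_ne hq0 hq1 hr hz)

lemma gstar_integrable (hq0 : 0 < q) (hq1 : q < 1) (hr : 1 < r) (n m a : ℤ) :
    CircleIntegrable (Gstar q n m a) 1 r :=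
  (gstar_contOn hq0 hq1 hr n m a).circleIntegrable (by linarith)

/-- The equivalence `ℕ ≃ {y // y < x}`, `k ↦ x - 1 - k`. -/
def intLtEquiv (x : ℤ) : ℕ ≃ {y : ℤ // y < x} where
  toFun k := ⟨x - 1 - k, by omega⟩
  invFun y := (x - 1 - y.1).toNat
  left_inv k := by
    show (x - 1 - (x - 1 - (k:ℤ))).toNat = k
    omega
  right_inv y := Subtype.ext (by
    have := y.2
    show x - 1 - ((x - 1 - y.1).toNat : ℤ) = y.1
    omega)

lemma tsum_lt_eq (g : ℤ → ℂ) (x : ℤ) :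
    ∑' (y : {y : ℤ // y < x}), g y.1 = ∑' (k : ℕ), g (x - 1 - k) := by
  exact ((Equiv.tsum_eq (intLtEquiv x)
      (fun y : {y : ℤ // y < x} => g y.1)).symm).trans (tsum_congr fun k => rfl)

lemma cint_step (hq0 : 0 < q) (hq1 : q < 1) (hr : 1 < r) (n m a : ℤ) :
    cint 1 r (Gstar q n m (a + 1)) - cint 1 r (Gstar q n m a)
      = -cint 1 r (Gstar q (n + 1) m a) := by
  unfold cint
  rw [← mul_sub, ← mul_neg]
  congr 1
  rw [← circleIntegral.integral_sub (gstar_integrable hq0 hq1 hr n m (a+1))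
    (gstar_integrable hq0 hq1 hr n m a)]
  have heq : Set.EqOn (fun z => Gstar q n m (a+1) z - Gstar q n m a z)
      (fun z => (-1:ℂ) * Gstar q (n+1) m a z) (sphere (1:ℂ) r) := fun z hz => by
    simp only
    rw [pointwise_step hq0 hq1 hr n m a hz]; ring
  rw [circleIntegral.integral_congr (by linarith : (0:ℝ) ≤ r) heq,
    circleIntegral.integral_const_mul]
  ring

lemma cint_sum (hq0 : 0 < q) (hq1 : q < 1) (hr : 1 < r) (n m x : ℤ) :
    ∑' (k : ℕ), cint 1 r (Gstar q n m (x - 2 - k)) = -cint 1 r (Gstar q (n - 1) m (x - 1)) := by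
  unfold cint
  rw [tsum_mul_left, ← mul_neg]
  congr 1
  obtain ⟨B, hB⟩ := (isCompact_sphere (1:ℂ) r).exists_bound_of_continuousOn
    (gstar_contOn hq0 hq1 hr n m (x - 2))
  have hrpos : (0:ℝ) < r := by linarith
  have hrinv : r⁻¹ < 1 := by rw [inv_lt_one_iff₀]; right; exact hr
  have hsum : Summable (fun k : ℕ => (max B 0) * (r⁻¹)^k) :=
    (summable_geometric_of_lt_one (by positivity) hrinv).mul_left _
  have hswap := circleIntegral_tsum (f := fun k : ℕ => Gstar q n m (x - 2 - k)) (c := 1)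
      (R := r) hrpos (fun k => gstar_contOn hq0 hq1 hr n m _) hsum
      (fun k z hz => by
        show ‖Gstar q n m (x - 2 - k) z‖ ≤ _
        rw [Gstar_shift hr n m (x - 2) k hz, norm_mul, norm_pow, norm_inv, norm_one_sub hz]
        exact mul_le_mul ((hB z hz).trans (le_max_left _ _)) le_rfl (by positivity)
          (le_max_right _ _))
  rw [← hswap]
  have heq : Set.EqOn (fun z => ∑' (k : ℕ), Gstar q n m (x - 2 - k) z)
      (fun z => (-1:ℂ) * Gstar q (n-1) m (x - 1) z) (sphere (1:ℂ) r) := fun z hz => by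
    simp only
    rw [(pointwise_geom hq0 hq1 hr n m x hz).tsum_eq]; ring
  rw [circleIntegral.integral_congr (by linarith : (0:ℝ) ≤ r) heq,
    circleIntegral.integral_const_mul]
  ring

lemma Gstar_pole_form (hq0 : 0 < q) (hq1 : q < 1) (hr : 1 < r) (n a : ℤ) (m : ℕ) {z : ℂ}
    (hz : z ∈ sphere (1:ℂ) r) :
    Gstar q n (m:ℤ) a z
      = z ^ n * (1 - z) ^ (a + m) * ((z - (1 - (q:ℂ))) ^ (m:ℤ))⁻¹ * (-(1 - (q:ℂ))) ^ m := by
  have h1q := one_sub_q_ne (q := q) hq1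
  have hzp : z - (1 - (q:ℂ)) ≠ 0 := sub_ne_zero.2 (z_ne_pole hq0 hq1 hr hz)
  have hneg : -(1 - (q:ℂ)) ≠ 0 := neg_ne_zero.2 h1q
  have hbase : (1:ℂ) - z / (1 - (q:ℂ)) = (z - (1 - (q:ℂ))) * (-(1 - (q:ℂ)))⁻¹ := by
    rw [← div_eq_mul_inv, eq_div_iff hneg]
    field_simp
    ring
  unfold _root_.Gstar
  rw [hbase, mul_zpow, div_eq_mul_inv, mul_inv,
    show ((-(1 - (q:ℂ)))⁻¹) ^ (m:ℤ) = ((-(1 - (q:ℂ))) ^ m)⁻¹ by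
      rw [zpow_natCast, inv_pow], inv_inv]
  ring

lemma pole_mem_ball (hq0 : 0 < q) (hq1 : q < 1) (hr : 1 < r) :
    (1 - (q:ℂ)) ∈ Metric.ball (1:ℂ) r := by
  simp only [Metric.mem_ball, Complex.dist_eq]
  have : (1 - (q:ℂ)) - 1 = -(q:ℂ) := by ring
  rw [this]
  simp [abs_of_pos hq0]
  linarith

lemma two_pi_I_ne : (2 * (Real.pi:ℂ) * Complex.I) ≠ 0 := by
  simp [Real.pi_ne_zero, Complex.I_ne_zero]

/-- Base case, `x - 1 + m ≥ 0` : the integral picks the residue at `1 - q`. -/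
lemma cint_base_nonneg (hq0 : 0 < q) (hq1 : q < 1) {m : ℕ} (hm : 1 ≤ m) (hr : 1 < r)
    (x : ℤ) (hx : 0 ≤ x - 1 + m) :
    cint 1 r (Gstar q 0 (m:ℤ) (x - 1)) = -(wgt q m x) := by
  set p : ℂ := 1 - (q:ℂ) with hp
  set A : ℕ := (x - 1 + m).toNat with hA
  have hAZ : (A : ℤ) = x - 1 + m := Int.toNat_of_nonneg hx
  set coef : ℕ → ℂ := fun k =>
    (A.choose k : ℂ) * (-1) ^ k * (q:ℂ) ^ (A - k) * (-(1 - (q:ℂ))) ^ m with hcoef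
  -- pointwise finite expansion
  have heq : Set.EqOn (Gstar q 0 (m:ℤ) (x - 1))
      (fun z => ∑ k ∈ Finset.range (A + 1), coef k * (z - p) ^ ((k:ℤ) - m))
      (Metric.sphere (1:ℂ) r) := by
    intro z hz
    have hzp : z - p ≠ 0 := sub_ne_zero.2 (z_ne_pole hq0 hq1 hr hz)
    rw [Gstar_pole_form hq0 hq1 hr 0 (x-1) m hz]
    simp only [zpow_zero, one_mul]
    have e1 : x - 1 + (m:ℤ) = (A:ℤ) := hAZ.symm
    rw [e1, zpow_natCast]
    have e2 : (1 : ℂ) - z = -(z - p) + (q:ℂ) := by rw [hp]; ring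
    rw [e2, add_pow]
    rw [Finset.sum_mul, Finset.sum_mul]
    refine Finset.sum_congr rfl fun k hk => ?_
    have e3 : (-(z - p)) ^ k = (-1:ℂ) ^ k * (z - p) ^ k := by
      rw [neg_pow]
    rw [e3]
    have e4 : (z - p) ^ ((k:ℤ) - m) = (z - p) ^ k * ((z - p) ^ (m:ℤ))⁻¹ := by
      rw [zpow_sub₀ hzp, div_eq_mul_inv, zpow_natCast]
    rw [hcoef]
    simp only
    rw [e4]
    ring
  -- integrate
  have hint : ∀ k, CircleIntegrable (fun z => coef k * (z - p) ^ ((k:ℤ) - m)) 1 r := by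
    intro k
    apply ContinuousOn.circleIntegrable (by linarith : (0:ℝ) ≤ r)
    exact continuousOn_const.mul (((continuousOn_id.sub continuousOn_const)).zpow₀ _
      fun z hz => Or.inl (sub_ne_zero.2 (z_ne_pole hq0 hq1 hr hz)))
  unfold cint
  rw [circleIntegral.integral_congr (by linarith : (0:ℝ) ≤ r) heq,
    circleIntegral_finset_sum _ (fun k _ => hint k)]
  have hterm : ∀ k, (∮ z in C(1, r), coef k * (z - p) ^ ((k:ℤ) - m))
      = coef k * ∮ z in C(1, r), (z - p) ^ ((k:ℤ) - m) := fun k =>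
    circleIntegral.integral_const_mul _ _ _ _
  simp only [hterm]
  by_cases hcase : 0 ≤ x
  · -- the residue term k = m - 1 survives
    have hmem : m - 1 ∈ Finset.range (A + 1) := by
      simp only [Finset.mem_range]; omega
    rw [Finset.sum_eq_single_of_mem (m - 1) hmem (fun k _ hk => ?_)]
    swap
    · have hne : (k:ℤ) - m ≠ -1 := by omega
      rw [circleIntegral.integral_sub_zpow_of_ne hne, mul_zero]
    · have he : ((m - 1 : ℕ) : ℤ) - m = -1 := by omega
      rw [he]
      simp only [zpow_neg_one]
      rw [circleIntegral.integral_sub_inv_of_mem_ball (pole_mem_ball hq0 hq1 hr)]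
      rw [← mul_assoc, mul_comm _ (coef (m-1)), mul_assoc,
        inv_mul_cancel₀ two_pi_I_ne, mul_one]
      -- now evaluate coef (m - 1)
      rw [hcoef]
      simp only
      have hchoose : A.choose (m - 1) = ((x.toNat + m - 1).choose x.toNat) := by
        have h1 : (x.toNat + m - 1) = A := by omega
        have h2 : x.toNat = A - (m - 1) := by omega
        rw [h1, h2, Nat.choose_symm (by omega : m - 1 ≤ A)]
      have hqpow : ((q:ℂ)) ^ (A - (m - 1)) = (q:ℂ) ^ x := by
        have : (A - (m-1) : ℕ) = x.toNat := by omega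
        rw [this, ← zpow_natCast ((q:ℂ)) x.toNat]
        congr 1
        omega
      have hsign : ((-1:ℂ)) ^ (m - 1) * (-(1 - (q:ℂ))) ^ m = -(((1:ℂ) - (q:ℂ)) ^ m) := by
        have hs : (-1:ℂ) ^ (m - 1) * (-1:ℂ) ^ m = -1 := by
          rw [← pow_add]
          have h2 : m - 1 + m = 2 * (m - 1) + 1 := by omega
          rw [h2, pow_succ, pow_mul]
          simp
        rw [neg_pow ((1:ℂ) - (q:ℂ)) m, ← mul_assoc, hs, neg_one_mul]
      rw [wgt, if_pos hcase, hchoose, hqpow]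
      calc (↑(((x.toNat + m - 1).choose x.toNat)) : ℂ) * (-1) ^ (m - 1) * (q:ℂ) ^ x
            * (-(1 - (q:ℂ))) ^ m
          = (↑(((x.toNat + m - 1).choose x.toNat)) : ℂ) * ((-1) ^ (m - 1) * (-(1 - (q:ℂ))) ^ m)
            * (q:ℂ) ^ x := by ring
        _ = -(↑(((x.toNat + m - 1).choose x.toNat)) * (1 - (q:ℂ)) ^ m * (q:ℂ) ^ x) := by
            rw [hsign]; ring
  · -- x < 0 : every term vanishes
    rw [Finset.sum_eq_zero fun k hk => ?_]
    · rw [wgt, if_neg hcase]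
      simp
    · have hkA : k ≤ A := by
        simp only [Finset.mem_range] at hk; omega
      have hne : (k:ℤ) - m ≠ -1 := by omega
      rw [circleIntegral.integral_sub_zpow_of_ne hne, mul_zero]

/-- Base case, `x + m ≤ 0`: the integral vanishes. -/
lemma cint_base_neg (hq0 : 0 < q) (hq1 : q < 1) {m : ℕ} (hm : 1 ≤ m) (hr : 1 < r)
    (x : ℤ) (hx : x + m ≤ 0) :
    cint 1 r (Gstar q 0 (m:ℤ) (x - 1)) = 0 := by
  have hrpos : (0:ℝ) < r := by linarith
  set S : ℂ := (-1:ℂ) ^ (x - 1 + (m:ℤ)) * (-(1 - (q:ℂ))) ^ m with hS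
  set K : ℕ → ℂ := fun j => ((j + (m - 1)).choose (m - 1) : ℂ) * (-(q:ℂ)) ^ j * S with hK
  have hu : ∀ z ∈ Metric.sphere (1:ℂ) r, z - (1:ℂ) ≠ 0 := by
    intro z hz h
    have := norm_sub_one hz
    rw [h] at this; simp at this; linarith
  -- pointwise expansion
  have hpt : ∀ z ∈ Metric.sphere (1:ℂ) r,
      HasSum (fun j : ℕ => K j * (z - 1) ^ (x - 1 - (j:ℤ))) (Gstar q 0 (m:ℤ) (x - 1) z) := by
    intro z hz
    have hu' := hu z hz
    have hupow : (z - 1) ^ m ≠ 0 := pow_ne_zero m hu'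
    set t : ℂ := -(q:ℂ) / (z - 1) with ht
    have hnt : ‖t‖ < 1 := by
      rw [ht, norm_div, norm_neg, Complex.norm_real, Real.norm_eq_abs, abs_of_pos hq0,
        norm_sub_one hz]
      rw [div_lt_one hrpos]; linarith
    set c : ℂ := S * (z - 1) ^ (x - 1 + (m:ℤ)) * ((z - 1) ^ m)⁻¹ with hc
    have hgeom := (hasSum_choose_mul_geometric_of_norm_lt_one (m - 1) hnt).mul_left c
    have h1t : (1:ℂ) - t = ((z - 1) + (q:ℂ)) / (z - 1) := by
      rw [ht]; field_simp; ring
    have hterm : ∀ j : ℕ,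
        c * (((j + (m - 1)).choose (m - 1) : ℂ) * t ^ j) = K j * (z - 1) ^ (x - 1 - (j:ℤ)) := by
      intro j
      have htj : t ^ j = (-(q:ℂ)) ^ j * ((z - 1) ^ j)⁻¹ := by
        rw [ht, div_pow, div_eq_mul_inv]
      have hzp : (z - 1) ^ (x - 1 + (m:ℤ)) * ((z - 1) ^ m)⁻¹ * ((z - 1) ^ j)⁻¹
          = (z - 1) ^ (x - 1 - (j:ℤ)) := by
        rw [← zpow_natCast (z - 1) m, ← zpow_natCast (z - 1) j, ← zpow_neg, ← zpow_neg,
          ← zpow_add₀ hu', ← zpow_add₀ hu']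
        congr 1
        ring
      rw [htj, hc, hK]
      simp only
      rw [← hzp]
      ring
    have heval : c * (1 / (1 - t) ^ (m - 1 + 1)) = Gstar q 0 (m:ℤ) (x - 1) z := by
      have hm1 : m - 1 + 1 = m := by omega
      rw [hm1, h1t, div_pow, Gstar_pole_form hq0 hq1 hr 0 (x - 1) m hz]
      have hzq : z - (1 - (q:ℂ)) = (z - 1) + (q:ℂ) := by ring
      have h1z : (1:ℂ) - z = (z - 1) * (-1) := by ring
      rw [hzq, h1z, mul_zpow, zpow_natCast]
      have hd : ((z - 1) + (q:ℂ)) ^ m ≠ 0 := by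
        rw [← hzq]
        exact pow_ne_zero m (sub_ne_zero.2 (z_ne_pole hq0 hq1 hr hz))
      rw [hc, hS]
      field_simp
    rw [funext hterm, heval] at hgeom
    exact hgeom
  -- each term has zero integral
  have hzero : ∀ j : ℕ, (∮ z in C(1, r), K j * (z - 1) ^ (x - 1 - (j:ℤ))) = 0 := by
    intro j
    rw [circleIntegral.integral_const_mul,
      circleIntegral.integral_sub_zpow_of_ne (by omega : x - 1 - (j:ℤ) ≠ -1), mul_zero]
  -- continuity of terms
  have hcont : ∀ j : ℕ, ContinuousOn (fun z : ℂ => K j * (z - 1) ^ (x - 1 - (j:ℤ)))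
      (Metric.sphere (1:ℂ) r) := fun j =>
    continuousOn_const.mul ((continuousOn_id.sub continuousOn_const).zpow₀ _
      fun z hz => Or.inl (hu z hz))
  -- summable bound
  have hqr : ‖q / r‖ < 1 := by
    rw [Real.norm_eq_abs, abs_of_pos (by positivity), div_lt_one hrpos]; linarith
  have hCsum : Summable (fun j : ℕ =>
      ‖S‖ * r ^ (x - 1 : ℤ) * (((j + (m - 1)).choose (m - 1) : ℝ) * (q / r) ^ j)) :=
    (summable_choose_mul_geometric_of_norm_lt_one (m - 1) hqr).mul_left _
  have hb : ∀ j : ℕ, ∀ z ∈ Metric.sphere (1:ℂ) r,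
      ‖K j * (z - 1) ^ (x - 1 - (j:ℤ))‖
        ≤ ‖S‖ * r ^ (x - 1 : ℤ) * (((j + (m - 1)).choose (m - 1) : ℝ) * (q / r) ^ j) := by
    intro j z hz
    apply le_of_eq
    rw [norm_mul, norm_zpow, norm_sub_one hz, hK]
    simp only
    rw [norm_mul, norm_mul, norm_pow, norm_neg, Complex.norm_real, Real.norm_eq_abs,
      abs_of_pos hq0, Complex.norm_natCast]
    rw [zpow_sub₀ (by positivity : r ≠ 0), zpow_natCast, div_pow]
    field_simp
  -- put it together
  unfold cint
  rw [circleIntegral.integral_congr (by linarith : (0:ℝ) ≤ r)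
    (fun z hz => ((hpt z hz).tsum_eq).symm : Set.EqOn (Gstar q 0 (m:ℤ) (x-1))
      (fun z => ∑' j : ℕ, K j * (z - 1) ^ (x - 1 - (j:ℤ))) (Metric.sphere (1:ℂ) r))]
  rw [circleIntegral_tsum hrpos hcont hCsum hb]
  simp [hzero]

lemma nabIter_zero (f : ℤ → ℂ) : nabIter 0 f = f := rfl

lemma nabIter_coe_succ (k : ℕ) (f : ℤ → ℂ) :
    nabIter ((k:ℤ) + 1) f = nab (nabIter (k:ℤ) f) := by
  have h1 : ((k:ℤ) + 1) = ((k + 1 : ℕ) : ℤ) := by push_cast; ring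
  rw [h1]
  simp only [nabIter, if_pos (by positivity : (0:ℤ) ≤ ((k + 1 : ℕ) : ℤ)),
    if_pos (by positivity : (0:ℤ) ≤ ((k : ℕ) : ℤ)), Int.toNat_natCast]
  exact Function.iterate_succ_apply' nab k f

lemma nabIter_neg (k : ℕ) (f : ℤ → ℂ) : nabIter (-(k:ℤ)) f = nabInv^[k] f := by
  cases k with
  | zero => simp [nabIter]
  | succ k =>
    have h : ¬ (0:ℤ) ≤ -((k + 1 : ℕ) : ℤ) := by push_cast; omega
    simp only [nabIter, if_neg h, neg_neg, Int.toNat_natCast]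

lemma nabIter_neg_succ (k : ℕ) (f : ℤ → ℂ) :
    nabIter (-(k:ℤ) - 1) f = nabInv (nabIter (-(k:ℤ)) f) := by
  have h1 : -(k:ℤ) - 1 = -((k + 1 : ℕ) : ℤ) := by push_cast; ring
  rw [h1, nabIter_neg, nabIter_neg]
  exact Function.iterate_succ_apply' nabInv k f

lemma neg_one_zpow_add_one (j : ℤ) : (-1:ℂ) ^ (j + 1) = -((-1:ℂ) ^ j) := by
  rw [zpow_add_one₀ (by norm_num : (-1:ℂ) ≠ 0)]; ring

lemma neg_one_zpow_sub_one (j : ℤ) : (-1:ℂ) ^ (j - 1) = -((-1:ℂ) ^ j) := by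
  rw [zpow_sub_one₀ (by norm_num : (-1:ℂ) ≠ 0), inv_neg, inv_one]
  ring

end S6

/-- (Formula (4.2) of the paper.)  For every `m ≥ 1`, `n, x ∈ ℤ`
and radius `r > 1`, `∇^n w_m(x) = (−1)^{n−1} ∮_{γ_r(1)} G*(z | n, m, x−1) dz`. -/
theorem statement6
    (q : ℝ) (hq0 : 0 < q) (hq1 : q < 1)
    (m : ℕ) (hm : 1 ≤ m) (n x : ℤ) (r : ℝ) (hr : 1 < r) :
    nabIter n (wgt q m) x
      = (-1 : ℂ) ^ (n - 1) * cint 1 r (fun z => Gstar q n (m : ℤ) (x - 1) z) := by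
  have key : ∀ n : ℤ, ∀ x : ℤ, nabIter n (wgt q m) x
      = (-1:ℂ) ^ (n - 1) * cint 1 r (Gstar q n (m:ℤ) (x - 1)) := by
    intro n
    induction n using Int.induction_on with
    | zero =>
      intro x
      rw [S6.nabIter_zero]
      have hneg1 : ((-1:ℂ)) ^ ((0:ℤ) - 1) = -1 := by
        rw [show (0:ℤ) - 1 = -1 by ring, zpow_neg, zpow_one, inv_neg, inv_one]
      by_cases hx : 0 ≤ x - 1 + m
      · rw [S6.cint_base_nonneg hq0 hq1 hm hr x hx, hneg1]
        ring
      · rw [S6.cint_base_neg hq0 hq1 hm hr x (by omega), hneg1]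
        rw [wgt, if_neg (by omega : ¬ (0:ℤ) ≤ x)]
        ring
    | succ k ih =>
      intro x
      rw [S6.nabIter_coe_succ]
      show nabIter (k:ℤ) (wgt q m) (x + 1) - nabIter (k:ℤ) (wgt q m) x = _
      rw [ih (x + 1), ih x]
      rw [show x + 1 - 1 = (x - 1) + 1 by ring]
      rw [← mul_sub, S6.cint_step hq0 hq1 hr (k:ℤ) (m:ℤ) (x - 1)]
      rw [show (k:ℤ) + 1 - 1 = ((k:ℤ) - 1) + 1 by ring, S6.neg_one_zpow_add_one]
      ring
    | pred k ih =>
      intro x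
      rw [S6.nabIter_neg_succ]
      show (∑' y : {y : ℤ // y < x}, nabIter (-(k:ℤ)) (wgt q m) y.1) = _
      rw [tsum_congr (fun y : {y : ℤ // y < x} => ih y.1)]
      rw [tsum_mul_left]
      rw [S6.tsum_lt_eq (fun y => cint 1 r (Gstar q (-(k:ℤ)) (m:ℤ) (y - 1))) x]
      have hsh : ∀ j : ℕ, x - 1 - (j:ℤ) - 1 = x - 2 - (j:ℤ) := fun j => by ring
      simp only [hsh]
      rw [S6.cint_sum hq0 hq1 hr (-(k:ℤ)) (m:ℤ) x]
      rw [S6.neg_one_zpow_sub_one (-(k:ℤ) - 1)]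
      ring
  exact key n x

end
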